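/- Let φ : ℝ → ℝ be defined by φ(s) = ∫₀ˢ (1+|t|)⁻² dt. Then for all x, y ∈ ℝ one has (log(1+|x|) − log(1+|y|))² ≤ (x − y)(φ(x) − φ(y)). -/

import Mathlib

open intervalIntegral

/-- Closed form for `φ`. -/
lemma phi_eval (s : ℝ) : (∫ t in (0:ℝ)..s, ((1 + |t|) ^ 2)⁻¹) = s / (1 + |s|) := by
  have hcont : Continuous fun t : ℝ => ((1 + |t|) ^ 2)⁻¹ := by
    apply Continuous.inv₀
    · exact (continuous_const.add continuous_abs).pow 2
    · intro t
      have : (0:ℝ) < 1 + |t| := by positivity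
      positivity
  rcases le_or_gt 0 s with hs | hs
  · have hderiv : ∀ t ∈ Set.uIcc (0:ℝ) s,
        HasDerivAt (fun u : ℝ => -(1 + u)⁻¹) (((1 + |t|) ^ 2)⁻¹) t := by
      intro t ht
      rw [Set.uIcc_of_le hs] at ht
      have h0 : (0:ℝ) ≤ t := ht.1
      have h1 : (1:ℝ) + t ≠ 0 := by positivity
      have h2 : HasDerivAt (fun u : ℝ => 1 + u) 1 t := (hasDerivAt_id t).const_add 1
      have h3 := (h2.inv h1).neg
      refine h3.congr_deriv ?_
      rw [abs_of_nonneg h0]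
      field_simp
    rw [integral_eq_sub_of_hasDerivAt hderiv (hcont.intervalIntegrable 0 s)]
    rw [abs_of_nonneg hs]
    have h1 : (0:ℝ) < 1 + s := by linarith
    field_simp
    ring
  · have hderiv : ∀ t ∈ Set.uIcc (0:ℝ) s,
        HasDerivAt (fun u : ℝ => (1 - u)⁻¹) (((1 + |t|) ^ 2)⁻¹) t := by
      intro t ht
      rw [Set.uIcc_of_ge hs.le] at ht
      have h0 : t ≤ 0 := ht.2
      have h1 : (1:ℝ) - t ≠ 0 := by nlinarith
      have h2 : HasDerivAt (fun u : ℝ => 1 - u) (-1) t := (hasDerivAt_id t).const_sub 1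
      have h3 := h2.inv h1
      refine h3.congr_deriv ?_
      rw [abs_of_nonpos h0]
      norm_num [sub_eq_add_neg]
    rw [integral_eq_sub_of_hasDerivAt hderiv (hcont.intervalIntegrable 0 s)]
    rw [abs_of_neg hs, show (1:ℝ) + -s = 1 - s from by ring]
    have h1 : (0:ℝ) < 1 - s := by linarith
    field_simp
    ring

/-- `2 log v ≤ v - v⁻¹` for `v ≥ 1`. -/
lemma two_log_le (v : ℝ) (hv : 1 ≤ v) : 2 * Real.log v ≤ v - v⁻¹ := by
  have hv0 : (0:ℝ) < v := lt_of_lt_of_le one_pos hv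
  have hderiv : ∀ t ∈ Set.uIcc (1:ℝ) v,
      HasDerivAt (fun u : ℝ => u - u⁻¹ - 2 * Real.log u) ((1 - t⁻¹) ^ 2) t := by
    intro t ht
    rw [Set.uIcc_of_le hv] at ht
    have ht0 : (0:ℝ) < t := lt_of_lt_of_le one_pos ht.1
    have h1 : HasDerivAt (fun u : ℝ => u - u⁻¹) (1 - (-(t^2)⁻¹)) t :=
      (hasDerivAt_id t).sub (hasDerivAt_inv ht0.ne')
    have h2 : HasDerivAt (fun u : ℝ => 2 * Real.log u) (2 * t⁻¹) t :=
      (Real.hasDerivAt_log ht0.ne').const_mul 2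
    have h3 := h1.sub h2
    refine h3.congr_deriv ?_
    field_simp
    ring
  have hint : IntervalIntegrable (fun t : ℝ => (1 - t⁻¹) ^ 2) MeasureTheory.volume 1 v := by
    apply ContinuousOn.intervalIntegrable
    apply ContinuousOn.pow
    apply ContinuousOn.sub continuousOn_const
    apply ContinuousOn.inv₀ continuousOn_id
    intro t ht
    rw [Set.uIcc_of_le hv] at ht
    have : (0:ℝ) < t := lt_of_lt_of_le one_pos ht.1
    exact this.ne'
  have key := integral_eq_sub_of_hasDerivAt hderiv hint
  have hnn : (0:ℝ) ≤ ∫ t in (1:ℝ)..v, (1 - t⁻¹) ^ 2 := by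
    apply intervalIntegral.integral_nonneg hv
    intro t _
    positivity
  rw [key] at hnn
  simp only [Real.log_one, inv_one] at hnn
  linarith

/-- Core inequality for nonnegative arguments. -/
lemma key_ineq (a b : ℝ) (ha : 0 ≤ a) (hb : 0 ≤ b) :
    (Real.log (1 + a) - Real.log (1 + b)) ^ 2 ≤ (a - b) ^ 2 / ((1 + a) * (1 + b)) := by
  wlog hab : b ≤ a with H
  · have h := H b a hb ha (le_of_not_ge hab)
    have e1 : (Real.log (1 + a) - Real.log (1 + b)) ^ 2
        = (Real.log (1 + b) - Real.log (1 + a)) ^ 2 := by ring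
    have e2 : (a - b) ^ 2 / ((1 + a) * (1 + b)) = (b - a) ^ 2 / ((1 + b) * (1 + a)) := by
      ring_nf
    rw [e1, e2]; exact h
  have hb1 : (0:ℝ) < 1 + b := by linarith
  have ha1 : (0:ℝ) < 1 + a := by linarith
  set v := Real.sqrt ((1 + a) / (1 + b)) with hvdef
  have hratio : (1:ℝ) ≤ (1 + a) / (1 + b) := by
    rw [le_div_iff₀ hb1]; linarith
  have hv1 : (1:ℝ) ≤ v := by
    rw [show (1:ℝ) = Real.sqrt 1 from Real.sqrt_one.symm]
    exact Real.sqrt_le_sqrt hratio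
  have hv0 : (0:ℝ) < v := lt_of_lt_of_le one_pos hv1
  have hvsq : v ^ 2 = (1 + a) / (1 + b) := Real.sq_sqrt (by positivity)
  have hlog : Real.log (1 + a) - Real.log (1 + b) = 2 * Real.log v := by
    rw [← Real.log_div ha1.ne' hb1.ne', ← hvsq, Real.log_pow]
    push_cast; ring
  have h1 := two_log_le v hv1
  have hL0 : (0:ℝ) ≤ 2 * Real.log v := by
    have := Real.log_nonneg hv1; linarith
  have hsq : (2 * Real.log v) ^ 2 ≤ (v - v⁻¹) ^ 2 := by
    apply pow_le_pow_left₀ hL0 h1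
  have heq : (v - v⁻¹) ^ 2 = (a - b) ^ 2 / ((1 + a) * (1 + b)) := by
    have e1 : (v - v⁻¹) ^ 2 = v ^ 2 - 2 + (v ^ 2)⁻¹ := by
      field_simp
      ring
    rw [e1, hvsq, inv_div]
    field_simp
    ring
  rw [hlog, ← heq]
  exact hsq

/-- Mixed sign case. -/
lemma mixed_ineq (a b : ℝ) (ha : 0 ≤ a) (hb : 0 ≤ b) :
    (Real.log (1 + a) - Real.log (1 + b)) ^ 2
      ≤ (a + b) * (a / (1 + a) + b / (1 + b)) := by
  have h := key_ineq a b ha hb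
  have hb1 : (0:ℝ) < 1 + b := by linarith
  have ha1 : (0:ℝ) < 1 + a := by linarith
  have h2 : (a - b) ^ 2 / ((1 + a) * (1 + b)) ≤ (a + b) * (a / (1 + a) + b / (1 + b)) := by
    rw [div_le_iff₀ (by positivity)]
    have e : (a + b) * (a / (1 + a) + b / (1 + b)) * ((1 + a) * (1 + b))
        = (a + b) * (a * (1 + b) + b * (1 + a)) := by
      field_simp
    rw [e]
    nlinarith [sq_nonneg (a + b), sq_nonneg (a - b), mul_nonneg ha hb,
      mul_nonneg (mul_nonneg ha hb) (add_nonneg ha hb)]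
  linarith

/-- For `φ(s) = ∫₀ˢ (1+|t|)⁻² dt`, one has
`(log(1+|x|) − log(1+|y|))² ≤ (x − y)(φ(x) − φ(y))` for all real `x, y`. -/
theorem sq_log_diff_le_mul_phi_diff
    (φ : ℝ → ℝ) (hφ : ∀ s : ℝ, φ s = ∫ t in (0:ℝ)..s, ((1 + |t|) ^ 2)⁻¹) :
    ∀ x y : ℝ,
      (Real.log (1 + |x|) - Real.log (1 + |y|)) ^ 2 ≤ (x - y) * (φ x - φ y) := by
  intro x y
  rw [hφ x, hφ y, phi_eval, phi_eval]
  rcases le_or_gt 0 x with hx | hx <;> rcases le_or_gt 0 y with hy | hy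
  · rw [abs_of_nonneg hx, abs_of_nonneg hy]
    have h := key_ineq x y hx hy
    have ha1 : (0:ℝ) < 1 + x := by linarith
    have hb1 : (0:ℝ) < 1 + y := by linarith
    have e : (x - y) * (x / (1 + x) - y / (1 + y)) = (x - y) ^ 2 / ((1 + x) * (1 + y)) := by
      field_simp; ring
    rw [e]; exact h
  · rw [abs_of_nonneg hx, abs_of_neg hy]
    have h := mixed_ineq x (-y) hx (by linarith)
    have e : (x - y) * (x / (1 + x) - y / (1 + -y))
        = (x + -y) * (x / (1 + x) + -y / (1 + -y)) := by ring
    rw [e]; exact h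
  · rw [abs_of_neg hx, abs_of_nonneg hy]
    have h := mixed_ineq (-x) y (by linarith) hy
    have e1 : (Real.log (1 + -x) - Real.log (1 + y)) ^ 2
        = (Real.log (1 + -x) - Real.log (1 + y)) ^ 2 := rfl
    have e : (x - y) * (x / (1 + -x) - y / (1 + y))
        = (-x + y) * (-x / (1 + -x) + y / (1 + y)) := by ring
    rw [e]; exact h
  · rw [abs_of_neg hx, abs_of_neg hy]
    have h := key_ineq (-x) (-y) (by linarith) (by linarith)
    have e : (x - y) * (x / (1 + -x) - y / (1 + -y))
        = (-x - -y) ^ 2 / ((1 + -x) * (1 + -y)) := by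
      have h1 : (0:ℝ) < 1 + -x := by linarith
      have h2 : (0:ℝ) < 1 + -y := by linarith
      field_simp; ring
    rw [e]; exact h
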